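/- arXiv:1208.1915 — 2 statements merged into one kernel-verified Lean document; each statement's English description precedes it below -/
import Mathlib

section
/- Let n ≥ 1, let (a_1, …, a_n) ∈ N(Δ_n), and let x_1, …, x_{n+1} be the sequence produced from (a_1, …, a_n) by the recursive rule. Then for every 2 ≤ i ≤ n: if a_{i-1} ≥ a_i then x_i > x_{i+1}, and if a_{i-1} < a_i then x_i < x_{i+1}. -/
/-- `ascZ x m` is the number of ascents in the integer sequence `x 1, …, x m`. -/
def ascZ (x : ℕ → ℤ) (m : ℕ) : ℕ :=
  ((Finset.Ico 1 m).filter (fun i => x i < x (i + 1))).card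

/-- `(a 1, …, a n) ∈ N(Δ_n)`: a 01-filling of the staircase `Δ_n` where row `i`
has its unique 1 in column `a i` (so `1 ≤ a i ≤ i`), with no NE-chain of length 3
(no `i < j < k` with `a i ≥ a j ≥ a k`). -/
def NDelta (a : ℕ → ℕ) (n : ℕ) : Prop :=
  (∀ i, 1 ≤ i → i ≤ n → 1 ≤ a i ∧ a i ≤ i) ∧
  ¬ ∃ i j k, 1 ≤ i ∧ i < j ∧ j < k ∧ k ≤ n ∧ a j ≤ a i ∧ a k ≤ a j

/-- `x 1, …, x (n+1)` is the (integer-valued) sequence produced from `(a 1, …, a n)`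
by the recursive rule: `x 1 = 0`, `x 2 = 1`, and for `2 ≤ i ≤ n`,
`x (i+1) = asc(x 1 … x i) + 1 + a i - i` if `a (i-1) < a i`, and
`x (i+1) = asc(x 1 … x i) + a i - i` if `a (i-1) ≥ a i`. -/
def RecRule (a : ℕ → ℕ) (n : ℕ) (x : ℕ → ℤ) : Prop :=
  x 1 = 0 ∧ x 2 = 1 ∧ ∀ i, 2 ≤ i → i ≤ n →
    x (i + 1) = if a (i - 1) < a i
      then (ascZ x i : ℤ) + 1 + (a i : ℤ) - (i : ℤ)
      else (ascZ x i : ℤ) + (a i : ℤ) - (i : ℤ)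

lemma ascZ_succ (x : ℕ → ℤ) (i : ℕ) (hi : 1 ≤ i) :
    ascZ x (i + 1) = ascZ x i + (if x i < x (i + 1) then 1 else 0) := by
  unfold ascZ
  rw [Nat.Ico_succ_right_eq_insert_Ico hi, Finset.filter_insert]
  split
  · rw [Finset.card_insert_of_notMem (by simp)]
  · simp

/-- Lemma 3.3 (second part): for `(a 1, …, a n) ∈ N(Δ_n)` and `2 ≤ i ≤ n`, we have
`x i > x (i+1)` if `a (i-1) ≥ a i`, and `x i < x (i+1)` if `a (i-1) < a i`. -/
theorem stmt3 (n : ℕ) (hn : 1 ≤ n) (a : ℕ → ℕ) (hA : NDelta a n)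
    (x : ℕ → ℤ) (hx : RecRule a n x) :
    ∀ i, 2 ≤ i → i ≤ n →
      (a i ≤ a (i - 1) → x (i + 1) < x i) ∧ (a (i - 1) < a i → x i < x (i + 1)) := by
  obtain ⟨hA1, -⟩ := hA
  obtain ⟨hx1, hx2, hxr⟩ := hx
  have ha1 : a 1 = 1 := le_antisymm (hA1 1 le_rfl hn).2 (hA1 1 le_rfl hn).1
  intro i hi
  induction i, hi using Nat.le_induction with
  | base =>
    intro h2n
    have ha2 : 1 ≤ a 2 := (hA1 2 (by norm_num) h2n).1
    have hasc2 : ascZ x 2 = 1 := by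
      have h := ascZ_succ x 1 le_rfl
      have h0 : ascZ x 1 = 0 := by simp [ascZ]
      rw [h0, if_pos (by rw [hx1, show x (1+1) = 1 from hx2]; norm_num)] at h
      simpa using h
    have hx3 := hxr 2 le_rfl h2n
    norm_num [hasc2, ha1] at hx3 ⊢
    constructor
    · intro h
      rw [if_neg (by omega)] at hx3
      have : a 2 = 1 := by omega
      rw [hx3, hx2, this]
      norm_num
    · intro h
      rw [if_pos h] at hx3
      rw [hx3, hx2]
      omega
  | succ i hi ih =>
    intro h
    have hin : i ≤ n := by omega
    obtain ⟨ih1, ih2⟩ := ih hin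
    have hxi1 := hxr i hi hin
    have hxi2 := hxr (i + 1) (by omega) h
    have hasc := ascZ_succ x i (by omega)
    simp only [Nat.add_sub_cancel] at hxi2 ⊢
    have hiff : x i < x (i + 1) ↔ a (i - 1) < a i := by
      constructor
      · intro hlt
        by_contra hc
        exact absurd (ih1 (by omega)) (by omega)
      · exact ih2
    have hb : 1 ≤ a (i + 1) := (hA1 (i + 1) (by omega) h).1
    by_cases hc : a (i - 1) < a i
    · rw [if_pos hc] at hxi1
      rw [if_pos (hiff.mpr hc)] at hasc
      by_cases hc2 : a i < a (i + 1)
      · rw [if_pos hc2] at hxi2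
        constructor
        · intro hle; omega
        · intro _; rw [hxi2, hxi1]; push_cast [hasc]; omega
      · rw [if_neg hc2] at hxi2
        constructor
        · intro _; rw [hxi2, hxi1]; push_cast [hasc]; omega
        · intro hlt; omega
    · rw [if_neg hc] at hxi1
      rw [if_neg (fun hlt => hc (hiff.mp hlt))] at hasc
      by_cases hc2 : a i < a (i + 1)
      · rw [if_pos hc2] at hxi2
        constructor
        · intro hle; omega
        · intro _; rw [hxi2, hxi1]; push_cast [hasc]; omega
      · rw [if_neg hc2] at hxi2
        constructor
        · intro _; rw [hxi2, hxi1]; push_cast [hasc]; omega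
        · intro hlt; omega
end

section
/- Let n ≥ 1 and let x = x_1 x_2 … x_{n+1} be a 210-avoiding primitive ascent sequence of length n+1. Set a_i = i + x_{i+1} − asc(x_1 x_2 … x_{i+1}) for 1 ≤ i ≤ n, and let x'_1, …, x'_{n+1} be the sequence produced from (a_1, …, a_n) by the recursive rule. Then x'_i = x_i for all 1 ≤ i ≤ n+1. -/
/-- `asc x m` is the number of ascents in the sequence `x 1, x 2, …, x m`. -/
def asc (x : ℕ → ℕ) (m : ℕ) : ℕ :=
  ((Finset.Ico 1 m).filter (fun i => x i < x (i + 1))).card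

/-- `x 1, …, x m` is an ascent sequence. -/
def AscentSeq (x : ℕ → ℕ) (m : ℕ) : Prop :=
  x 1 = 0 ∧ ∀ i, 2 ≤ i → i ≤ m → x i ≤ asc x (i - 1) + 1

/-- `x 1, …, x m` avoids the pattern 210. -/
def Avoids210 (x : ℕ → ℕ) (m : ℕ) : Prop :=
  ¬ ∃ i j k, 1 ≤ i ∧ i < j ∧ j < k ∧ k ≤ m ∧ x j < x i ∧ x k < x j

/-- `x 1, …, x m` is primitive: no two consecutive equal entries. -/
def Primitive (x : ℕ → ℕ) (m : ℕ) : Prop :=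
  ∀ i, 1 ≤ i → i < m → x i ≠ x (i + 1)

lemma asc_le (x : ℕ → ℕ) (j : ℕ) : asc x (j + 1) ≤ j := by
  calc ((Finset.Ico 1 (j+1)).filter (fun i => x i < x (i + 1))).card
      ≤ (Finset.Ico 1 (j+1)).card := Finset.card_filter_le _ _
    _ = j := by simp

lemma asc_succ (x : ℕ → ℕ) (m : ℕ) (hm : 1 ≤ m) :
    asc x (m + 1) = asc x m + if x m < x (m + 1) then 1 else 0 := by
  unfold asc
  rw [Nat.Ico_succ_right_eq_insert_Ico hm, Finset.filter_insert]
  split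
  · rw [Finset.card_insert_of_notMem (by simp)]
  · simp

/-- Part of Theorem 3.5 (`φ' ∘ φ = id`): if `x` is a 210-avoiding primitive ascent sequence
of length `n+1`, `a i = i + x (i+1) - asc(x 1 … x (i+1))`, and `x'` is produced from
`(a 1, …, a n)` by the recursive rule, then `x' i = x i` for all `1 ≤ i ≤ n+1`. -/
theorem stmt6 (n : ℕ) (hn : 1 ≤ n) (x : ℕ → ℕ)
    (hasc : AscentSeq x (n + 1)) (hav : Avoids210 x (n + 1)) (hprim : Primitive x (n + 1))
    (a : ℕ → ℕ) (ha : ∀ i, 1 ≤ i → i ≤ n → a i = i + x (i + 1) - asc x (i + 1))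
    (x' : ℕ → ℤ) (hx' : RecRule a n x') :
    ∀ i, 1 ≤ i → i ≤ n + 1 → x' i = (x i : ℤ) := by
  obtain ⟨h1, h2, h3⟩ := hx'
  have hx1 : x 1 = 0 := hasc.1
  have hx2 : x 2 = 1 := by
    have hle := hasc.2 2 le_rfl (by omega)
    have hne : x 1 ≠ x 2 := hprim 1 le_rfl (by omega)
    have h0 : asc x 1 = 0 := by simp [asc]
    simp only [show (2:ℕ) - 1 = 1 from rfl] at hle
    omega
  intro i
  induction i using Nat.strong_induction_on with
  | _ i IH =>
    intro hi1 hin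
    match i, hi1 with
    | 1, _ => rw [h1, hx1]; rfl
    | 2, _ => rw [h2, hx2]; rfl
    | (k+3), _ =>
      have hIH : ∀ j, 1 ≤ j → j ≤ k + 2 → x' j = (x j : ℤ) :=
        fun j hj1 hj2 => IH j (by omega) hj1 (by omega)
      have hascZ : ascZ x' (k+2) = asc x (k+2) := by
        unfold ascZ asc
        congr 1
        apply Finset.filter_congr
        intro j hj
        simp only [Finset.mem_Ico] at hj
        rw [hIH j hj.1 (by omega), hIH (j+1) (by omega) (by omega)]
        simp
      have e1 : a (k+2) = (k+2) + x (k+3) - asc x (k+3) := ha (k+2) (by omega) (by omega)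
      have e2 : a (k+1) = (k+1) + x (k+2) - asc x (k+2) := ha (k+1) (by omega) (by omega)
      have b1 : asc x (k+3) ≤ k+2 := asc_le x (k+2)
      have b2 : asc x (k+2) ≤ k+1 := asc_le x (k+1)
      have s1 : asc x (k+3) = asc x (k+2) + if x (k+2) < x (k+3) then 1 else 0 :=
        asc_succ x (k+2) (by omega)
      have hne : x (k+2) ≠ x (k+3) := hprim (k+2) (by omega) (by omega)
      have hrule := h3 (k+2) (by omega) (by omega)
      simp only [show k+2-1 = k+1 from rfl] at hrule
      rw [hascZ] at hrule
      by_cases hc : x (k+2) < x (k+3)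
      · rw [if_pos hc] at s1
        have hlt : a (k+1) < a (k+2) := by omega
        rw [if_pos hlt] at hrule
        rw [hrule]
        push_cast [e1]
        omega
      · rw [if_neg hc] at s1
        have hlt : ¬ a (k+1) < a (k+2) := by omega
        rw [if_neg hlt] at hrule
        rw [hrule]
        push_cast [e1]
        omega
end
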